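/- arXiv:0712.0574 — 3 statements merged into one kernel-verified Lean document; each statement's English description precedes it below -/
import Mathlib

section
/- Let H ∈ (0,1). For all real x ≥ 0, one has 1 + Σ_{n=1}^∞ x^{⌊n/H⌋}/(⌊n/H⌋)! ≤ e^x ≤ (e/H)·(1 + Σ_{n=1}^∞ x^{⌊n/H⌋}/((⌊(n-1)/H⌋+1)!)). -/
open Real

theorem stmt_0 (H : ℝ) (hH : H ∈ Set.Ioo (0:ℝ) 1) (x : ℝ) (hx : 0 ≤ x) :
    1 + ∑' n : ℕ, x ^ (⌊((n:ℝ) + 1) / H⌋₊) / (Nat.factorial ⌊((n:ℝ) + 1) / H⌋₊ : ℝ)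
      ≤ Real.exp x ∧
    Real.exp x ≤ (Real.exp 1 / H) *
      (1 + ∑' n : ℕ, x ^ (⌊((n:ℝ) + 1) / H⌋₊) / (Nat.factorial (⌊(n:ℝ) / H⌋₊ + 1) : ℝ)) := by
  obtain ⟨hH0, hH1⟩ := hH
  set b : ℕ → ℕ := fun n => ⌊(n:ℝ)/H⌋₊ with hbdef
  have hbn : ∀ n : ℕ, ⌊(n:ℝ)/H⌋₊ = b n := fun n => rfl
  have hcast : ∀ n : ℕ, ⌊((n:ℝ) + 1)/H⌋₊ = b (n+1) := by
    intro n
    simp only [hbdef]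
    congr 1
    push_cast
    ring
  have hb0 : b 0 = 0 := by simp [hbdef]
  have hbstep : ∀ n, b n + 1 ≤ b (n+1) := by
    intro n
    have h1 : ((n:ℝ)/H) + 1 ≤ ((n:ℝ)+1)/H := by
      rw [add_div]
      have : (1:ℝ) ≤ 1/H := by
        rw [le_div_iff₀ hH0]; linarith
      linarith
    calc b n + 1 = ⌊(n:ℝ)/H + 1⌋₊ := (Nat.floor_add_one (by positivity)).symm
      _ ≤ ⌊((n:ℝ)+1)/H⌋₊ := Nat.floor_le_floor h1
      _ = b (n+1) := hcast n
  have hbmono : StrictMono b := strictMono_nat_of_lt_succ (fun n => by have := hbstep n; omega)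
  have hbge : ∀ n : ℕ, n ≤ b n := by
    intro n
    apply Nat.le_floor
    rw [le_div_iff₀ hH0]
    have : (n:ℝ) * H ≤ (n:ℝ) * 1 := by
      apply mul_le_mul_of_nonneg_left hH1.le (by positivity)
    simpa using this
  have hg : Summable (fun k : ℕ => x ^ k / (Nat.factorial k : ℝ)) :=
    Real.summable_pow_div_factorial x
  have hgs : Summable (fun k : ℕ => x ^ (k+1) / (Nat.factorial (k+1) : ℝ)) := by
    have := hg.comp_injective (add_left_injective 1)
    simpa [Function.comp_def] using this
  have hfa : Summable (fun n : ℕ => x ^ (b (n+1)) / (Nat.factorial (b (n+1)) : ℝ)) := by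
    have hinj : Function.Injective (fun n : ℕ => b (n+1)) :=
      fun n m h => by exact Nat.succ_injective (hbmono.injective h)
    have := hg.comp_injective hinj
    simpa [Function.comp_def] using this
  have hexp : Real.exp x = ∑' k : ℕ, x ^ k / (Nat.factorial k : ℝ) := by
    rw [Real.exp_eq_exp_ℝ, NormedSpace.exp_eq_tsum_div]
  have hsplit : Real.exp x = 1 + ∑' k : ℕ, x ^ (k+1) / (Nat.factorial (k+1) : ℝ) := by
    rw [hexp, hg.tsum_eq_zero_add]
    norm_num
  constructor
  · -- lower bound
    simp only [hcast]
    rw [hsplit]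
    apply add_le_add_right
    apply Summable.tsum_le_tsum_of_inj (fun n => b (n+1) - 1)
    · intro n m h
      have h' : b (n+1) - 1 = b (m+1) - 1 := h
      have h1 := hbge (n+1)
      have h2 := hbge (m+1)
      have : b (n+1) = b (m+1) := by omega
      exact Nat.succ_injective (hbmono.injective this)
    · intro c _
      positivity
    · intro n
      have h1 := hbge (n+1)
      have h : b (n+1) - 1 + 1 = b (n+1) := by omega
      simp only [h]
      exact le_rfl
    · exact hfa
    · exact hgs
  · -- upper bound
    simp only [hcast, hbn]
    set t : ℕ → ℝ := fun n => x ^ (b (n+1)) / (Nat.factorial (b n + 1) : ℝ) with htdef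
    have htnn : ∀ n, 0 ≤ t n := fun n => by positivity
    have hSnn : 0 ≤ ∑' n, t n := tsum_nonneg htnn
    have h2e : (2:ℝ) ≤ Real.exp 1 := by
      have := Real.add_one_le_exp 1
      linarith
    have heH1 : (1:ℝ) ≤ Real.exp 1 / H := by
      rw [le_div_iff₀ hH0]
      linarith
    rcases le_or_gt 1 x with hx1 | hx1
    · -- x ≥ 1
      have hbub : ∀ n : ℕ, (b (n+1) : ℝ) ≤ ((n:ℝ)+1)/H := by
        intro n
        rw [← hcast n]
        exact Nat.floor_le (by positivity)
      have hblb : ∀ n : ℕ, (n:ℝ)/H < (b n : ℝ) + 1 := by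
        intro n
        exact Nat.lt_floor_add_one _
      have hdiff : ∀ n : ℕ, ((b (n+1) : ℝ)) - (b n : ℝ) ≤ 1/H + 1 := by
        intro n
        have h1 := hbub n
        have h2 := hblb n
        have : ((n:ℝ)+1)/H = (n:ℝ)/H + 1/H := by ring
        linarith [this ▸ h1]
      have hdiffe : ∀ n : ℕ, ((b (n+1) : ℝ)) - (b n : ℝ) ≤ Real.exp 1 / H := by
        intro n
        have h1 := hdiff n
        have h2 : 1/H + 1 ≤ Real.exp 1 / H := by
          have : 1/H + 1 = (1 + H)/H := by field_simp
          rw [this]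
          gcongr
          linarith
        linarith
      -- summability of t
      have ht : Summable t := by
        set C : ℕ := ⌈1/H⌉₊ + 1 with hCdef
        have hbC : ∀ n, b (n+1) ≤ b n + C := by
          intro n
          have h1 := hdiff n
          have h3 : (1:ℝ)/H ≤ (⌈(1:ℝ)/H⌉₊ : ℝ) := Nat.le_ceil _
          have : (b (n+1) : ℝ) ≤ (b n : ℝ) + (C : ℝ) := by
            push_cast [hCdef]
            linarith
          exact_mod_cast this
        have hsum2 : Summable (fun n : ℕ => x ^ C * (x ^ (b n) / (Nat.factorial (b n) : ℝ))) := by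
          apply Summable.mul_left
          have := hg.comp_injective hbmono.injective
          simpa [Function.comp_def] using this
        apply Summable.of_nonneg_of_le htnn _ hsum2
        intro n
        have hnum : x ^ (b (n+1)) ≤ x ^ (b n + C) := pow_le_pow_right₀ hx1 (hbC n)
        have hden : (Nat.factorial (b n) : ℝ) ≤ (Nat.factorial (b n + 1) : ℝ) := by
          exact_mod_cast Nat.factorial_le (Nat.le_succ _)
        have hden0 : (0:ℝ) < (Nat.factorial (b n) : ℝ) := by positivity
        calc t n ≤ x ^ (b n + C) / (Nat.factorial (b n) : ℝ) := by
              apply div_le_div₀ (by positivity) hnum hden0 hden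
          _ = x ^ C * (x ^ (b n) / (Nat.factorial (b n) : ℝ)) := by
              rw [pow_add]; ring
      -- key induction
      have key : ∀ N : ℕ, ∑ k ∈ Finset.range (b N), x ^ (k+1) / (Nat.factorial (k+1) : ℝ)
          ≤ (Real.exp 1 / H) * ∑ n ∈ Finset.range N, t n := by
        intro N
        induction N with
        | zero => simp [hb0]
        | succ N ih =>
          have hle : b N ≤ b (N+1) := by have := hbstep N; omega
          have hsplitsum : ∑ k ∈ Finset.range (b (N+1)), x ^ (k+1) / (Nat.factorial (k+1) : ℝ)
              = ∑ k ∈ Finset.range (b N), x ^ (k+1) / (Nat.factorial (k+1) : ℝ)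
                + ∑ k ∈ Finset.Ico (b N) (b (N+1)), x ^ (k+1) / (Nat.factorial (k+1) : ℝ) := by
            simp only [Finset.range_eq_Ico]
            exact (Finset.sum_Ico_consecutive _ (Nat.zero_le _) hle).symm
          have hblock : ∑ k ∈ Finset.Ico (b N) (b (N+1)), x ^ (k+1) / (Nat.factorial (k+1) : ℝ)
              ≤ (Real.exp 1 / H) * t N := by
            calc ∑ k ∈ Finset.Ico (b N) (b (N+1)), x ^ (k+1) / (Nat.factorial (k+1) : ℝ)
                ≤ ∑ _k ∈ Finset.Ico (b N) (b (N+1)), t N := by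
                  apply Finset.sum_le_sum
                  intro k hk
                  rw [Finset.mem_Ico] at hk
                  have hk1 : k + 1 ≤ b (N+1) := hk.2
                  have hk2 : b N + 1 ≤ k + 1 := by omega
                  have hnum : x ^ (k+1) ≤ x ^ (b (N+1)) := pow_le_pow_right₀ hx1 hk1
                  have hden : (Nat.factorial (b N + 1) : ℝ) ≤ (Nat.factorial (k+1) : ℝ) := by
                    exact_mod_cast Nat.factorial_le hk2
                  exact div_le_div₀ (by positivity) hnum (by positivity) hden
              _ = ((b (N+1) - b N : ℕ) : ℝ) * t N := by
                  rw [Finset.sum_const, Nat.card_Ico, nsmul_eq_mul]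
              _ ≤ (Real.exp 1 / H) * t N := by
                  apply mul_le_mul_of_nonneg_right _ (htnn N)
                  have : ((b (N+1) - b N : ℕ) : ℝ) = (b (N+1) : ℝ) - (b N : ℝ) := by
                    have := hbstep N
                    push_cast [Nat.cast_sub hle]
                    ring
                  rw [this]
                  exact hdiffe N
          rw [hsplitsum, Finset.sum_range_succ, mul_add]
          exact add_le_add ih hblock
      have hsum_le : (∑' k : ℕ, x ^ (k+1) / (Nat.factorial (k+1) : ℝ))
          ≤ (Real.exp 1 / H) * ∑' n, t n := by
        apply hgs.tsum_le_of_sum_le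
        intro s
        obtain ⟨M, hM⟩ := s.exists_nat_subset_range
        calc ∑ k ∈ s, x ^ (k+1) / (Nat.factorial (k+1) : ℝ)
            ≤ ∑ k ∈ Finset.range (b M), x ^ (k+1) / (Nat.factorial (k+1) : ℝ) := by
              apply Finset.sum_le_sum_of_subset_of_nonneg
              · exact hM.trans (Finset.range_subset_range.mpr (hbge M))
              · intro i _ _; positivity
          _ ≤ (Real.exp 1 / H) * ∑ n ∈ Finset.range M, t n := key M
          _ ≤ (Real.exp 1 / H) * ∑' n, t n := by
              apply mul_le_mul_of_nonneg_left _ (by positivity)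
              exact ht.sum_le_tsum _ (fun i _ => htnn i)
      calc Real.exp x = 1 + ∑' k : ℕ, x ^ (k+1) / (Nat.factorial (k+1) : ℝ) := hsplit
        _ ≤ 1 + (Real.exp 1 / H) * ∑' n, t n := by linarith
        _ ≤ (Real.exp 1 / H) * 1 + (Real.exp 1 / H) * ∑' n, t n := by linarith
        _ = (Real.exp 1 / H) * (1 + ∑' n, t n) := by ring
    · -- x < 1
      have h1 : Real.exp x ≤ Real.exp 1 := Real.exp_le_exp.mpr hx1.le
      have h2 : Real.exp 1 ≤ Real.exp 1 / H := by
        rw [le_div_iff₀ hH0]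
        nlinarith [Real.exp_pos 1]
      have h3 : (Real.exp 1 / H) * 1 ≤ (Real.exp 1 / H) * (1 + ∑' n, t n) := by
        apply mul_le_mul_of_nonneg_left _ (by positivity)
        linarith
      linarith
end

section
/- Let α ∈ (1,2], H ∈ (0,1) with 2H < α, and let (cₙ) be a sequence of positive reals satisfying cₙ = E[L^{2Hn}]/n! where L ≥ 0 satisfies E[Lⁿ] = A₁ⁿ·n!/Γ(1 + n(1−1/α)) for all integers n ≥ 1 (interpolated by Jensen's inequality for non-integer powers). Then with ρ₁ = α/(α−2H), lim_{n→∞} (n/(ρ₁e))·cₙ^{ρ₁/n} = (1/ρ₁)·(A₁·(2H)^{1/α}/(1−1/α)^{1−1/α})^{2Hρ₁}. -/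
open MeasureTheory Real Filter Topology

lemma ratio_tendsto (a : ℕ → ℕ) (l C : ℝ) (h : ∀ᶠ n in atTop, |(a n : ℝ) - l * n| ≤ C) :
    Tendsto (fun n : ℕ => (a n : ℝ) / n) atTop (𝓝 l) := by
  have h0 : Tendsto (fun n : ℕ => (a n : ℝ) / n - l) atTop (𝓝 0) := by
    apply squeeze_zero_norm' (a := fun n : ℕ => C / n) _ (tendsto_const_div_atTop_nhds_zero_nat C)
    filter_upwards [h, eventually_ge_atTop 1] with n hn hn1
    have hn0 : (0:ℝ) < n := by exact_mod_cast hn1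
    have heq : (a n : ℝ) / n - l = ((a n : ℝ) - l * n) / n := by field_simp
    rw [heq, norm_div, Real.norm_eq_abs, Real.norm_eq_abs, abs_of_pos hn0]
    gcongr
  have := h0.add_const l
  simpa using this

lemma log_div_nat_tendsto : Tendsto (fun n : ℕ => Real.log n / n) atTop (𝓝 0) :=
  (Real.isLittleO_log_id_atTop.tendsto_div_nhds_zero).comp tendsto_natCast_atTop_atTop

lemma stirling_log (s : ℕ → ℕ) (l : ℝ) (hl : 0 < l)
    (hs : Tendsto (fun n : ℕ => (s n : ℝ) / n) atTop (𝓝 l)) :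
    Tendsto (fun n : ℕ => (Real.log (Nat.factorial (s n)) - (s n : ℝ) * Real.log n) / n)
      atTop (𝓝 (l * Real.log l - l)) := by
  have hev : ∀ᶠ n : ℕ in atTop, l / 2 ≤ (s n : ℝ) / n ∧ (s n : ℝ) / n ≤ l + 1 := by
    have h1 := hs.eventually_const_le (by linarith : l / 2 < l)
    have h2 := hs.eventually_le_const (by linarith : l < l + 1)
    filter_upwards [h1, h2] with n a b; exact ⟨a, b⟩
  have hsc : Tendsto (fun n : ℕ => ((s n : ℕ) : ℝ)) atTop atTop := by
    apply tendsto_atTop_mono' _ _ (tendsto_natCast_atTop_atTop.const_mul_atTop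
      (by linarith : (0:ℝ) < l / 2))
    filter_upwards [hev, eventually_ge_atTop 1] with n hn hn1
    have hn0 : (0:ℝ) < n := by exact_mod_cast hn1
    calc l / 2 * n ≤ (s n : ℝ) / n * n := by nlinarith [hn.1]
    _ = s n := by field_simp
  have hsN : Tendsto s atTop atTop := tendsto_natCast_atTop_iff.mp hsc
  -- three pieces
  have T1 : Tendsto (fun n : ℕ => Real.log (Stirling.stirlingSeq (s n)) / n) atTop (𝓝 0) := by
    have hst : Tendsto (fun n : ℕ => Real.log (Stirling.stirlingSeq (s n))) atTop
        (𝓝 (Real.log (Real.sqrt Real.pi))) :=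
      ((Real.continuousAt_log (by positivity : Real.sqrt Real.pi ≠ 0)).tendsto.comp
        (Stirling.tendsto_stirlingSeq_sqrt_pi.comp hsN))
    simpa using hst.div_atTop tendsto_natCast_atTop_atTop
  have T2 : Tendsto (fun n : ℕ => Real.log (2 * (s n : ℝ)) / n) atTop (𝓝 0) := by
    apply squeeze_zero_norm' (a := fun n : ℕ => (Real.log 2 + Real.log (l + 1) + Real.log n) / n)
    · filter_upwards [hev, eventually_ge_atTop 1, hsN.eventually_ge_atTop 1]
        with n hn hn1 hs1
      have hn0 : (0:ℝ) < n := by exact_mod_cast hn1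
      have hs0 : (1:ℝ) ≤ s n := by exact_mod_cast hs1
      have hub : (s n : ℝ) ≤ (l + 1) * n := by
        have h' := mul_le_mul_of_nonneg_right hn.2 hn0.le
        rwa [div_mul_cancel₀ _ hn0.ne'] at h'
      have h2s : (1:ℝ) ≤ 2 * (s n : ℝ) := by linarith
      rw [Real.norm_eq_abs, abs_div, abs_of_pos hn0, abs_of_nonneg (Real.log_nonneg h2s)]
      gcongr
      calc Real.log (2 * (s n : ℝ)) ≤ Real.log (2 * ((l + 1) * n)) := by
            apply Real.log_le_log (by linarith) (by nlinarith)
      _ = Real.log 2 + Real.log (l + 1) + Real.log n := by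
            rw [← mul_assoc, Real.log_mul (by positivity) hn0.ne', Real.log_mul (by norm_num)
              (by positivity)]
    · have : Tendsto (fun n : ℕ => (Real.log 2 + Real.log (l+1)) / n + Real.log n / n) atTop
          (𝓝 (0 + 0)) :=
        (tendsto_const_div_atTop_nhds_zero_nat _).add log_div_nat_tendsto
      simpa [add_div] using this
  have T3 : Tendsto (fun n : ℕ => (s n : ℝ) / n * (Real.log ((s n : ℝ) / n) - 1)) atTop
      (𝓝 (l * (Real.log l - 1))) := by
    have hc : ContinuousAt (fun x : ℝ => x * (Real.log x - 1)) l :=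
      continuousAt_id.mul ((Real.continuousAt_log hl.ne').sub continuousAt_const)
    exact hc.tendsto.comp hs
  have Tsum : Tendsto (fun n : ℕ => Real.log (Stirling.stirlingSeq (s n)) / n
      + (1/2) * Real.log (2 * (s n : ℝ)) / n
      + (s n : ℝ) / n * (Real.log ((s n : ℝ) / n) - 1)) atTop
      (𝓝 (0 + 0 + l * (Real.log l - 1))) := by
    apply (T1.add _).add T3
    have := T2.const_mul (1/2 : ℝ)
    simpa [mul_div_assoc] using this
  rw [show (0:ℝ) + 0 + l * (Real.log l - 1) = l * Real.log l - l by ring] at Tsum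
  apply Tsum.congr'
  filter_upwards [eventually_ge_atTop 1, hsN.eventually_ge_atTop 1] with n hn1 hs1
  have hn0 : (0:ℝ) < n := by exact_mod_cast hn1
  have hs0 : (0:ℝ) < s n := by exact_mod_cast hs1
  have hform := Stirling.log_stirlingSeq_formula (s n)
  have hlf : Real.log (Nat.factorial (s n)) = Real.log (Stirling.stirlingSeq (s n))
      + 1/2 * Real.log (2 * (s n : ℝ)) + (s n : ℝ) * Real.log ((s n : ℝ) / Real.exp 1) := by
    rw [hform]; push_cast; ring
  rw [hlf, Real.log_div hs0.ne' (Real.exp_pos 1).ne', Real.log_exp,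
    Real.log_div hs0.ne' hn0.ne']
  field_simp
  ring

lemma gamma_upper {x : ℝ} (hx : 1 ≤ x) :
    Real.Gamma (1 + x) ≤ ((Nat.floor x + 1).factorial : ℝ) := by
  set k := Nat.floor x with hk
  have hk1 : 1 ≤ k := Nat.one_le_floor_iff x |>.mpr (by exact_mod_cast hx)
  have hkle : (k : ℝ) ≤ x := Nat.floor_le (by linarith)
  have hxlt : x < k + 1 := Nat.lt_floor_add_one x
  set t := x - k with ht
  have ht0 : 0 ≤ t := by simp [ht]; linarith
  have ht1 : t ≤ 1 := by simp [ht]; linarith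
  have hcx : (1 : ℝ) - t + t = 1 := by ring
  have hconv := Real.convexOn_log_Gamma.2 (Set.mem_Ioi.mpr (by positivity : (0:ℝ) < (k:ℝ) + 1))
    (Set.mem_Ioi.mpr (by positivity : (0:ℝ) < (k:ℝ) + 2)) (by linarith : (0:ℝ) ≤ 1 - t) ht0 hcx
  have hpt : (1 - t) • ((k:ℝ) + 1) + t • ((k:ℝ) + 2) = 1 + x := by
    simp only [smul_eq_mul]; rw [ht]; ring
  rw [hpt] at hconv
  have hg1 : Real.Gamma ((k:ℝ) + 1) = (Nat.factorial k : ℝ) := Real.Gamma_nat_eq_factorial k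
  have hg2 : Real.Gamma ((k:ℝ) + 2) = (Nat.factorial (k+1) : ℝ) := by
    have := Real.Gamma_nat_eq_factorial (k+1)
    push_cast at this ⊢
    convert this using 2
    ring
  simp only [Function.comp_apply] at hconv
  rw [hg1, hg2] at hconv
  have hfle : Real.log (Nat.factorial k : ℝ) ≤ Real.log (Nat.factorial (k+1) : ℝ) :=
    Real.log_le_log (by positivity) (by exact_mod_cast Nat.factorial_le (Nat.le_succ k))
  have hle : Real.log (Real.Gamma (1 + x)) ≤ Real.log (Nat.factorial (k+1) : ℝ) := by
    calc Real.log (Real.Gamma (1 + x)) ≤ (1 - t) * Real.log (Nat.factorial k : ℝ)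
        + t * Real.log (Nat.factorial (k+1) : ℝ) := by simpa using hconv
    _ ≤ (1 - t) * Real.log (Nat.factorial (k+1) : ℝ) + t * Real.log (Nat.factorial (k+1) : ℝ) := by
        nlinarith
    _ = Real.log (Nat.factorial (k+1) : ℝ) := by ring
  have hgpos : 0 < Real.Gamma (1 + x) := Real.Gamma_pos_of_pos (by linarith)
  exact (Real.log_le_log_iff hgpos (by positivity)).mp hle

lemma gamma_lower {x : ℝ} (hx : 1 ≤ x) :
    ((Nat.floor x).factorial : ℝ) ≤ Real.Gamma (1 + x) := by
  set k := Nat.floor x with hk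
  have hk1 : 1 ≤ k := Nat.one_le_floor_iff x |>.mpr (by exact_mod_cast hx)
  have hkpos : (0:ℝ) < k := by exact_mod_cast hk1
  have hkle : (k : ℝ) ≤ x := Nat.floor_le (by linarith)
  have hxpos : (0:ℝ) < x := by linarith
  set θ := (x - k) / x with hθ
  have hθ0 : 0 ≤ θ := by apply div_nonneg <;> linarith
  have hθc : 1 - θ = k / x := by simp only [hθ]; field_simp; ring
  have h1θ : 0 ≤ 1 - θ := by rw [hθc]; positivity
  have hcx : θ + (1 - θ) = 1 := by ring
  have hconv := Real.convexOn_log_Gamma.2 (Set.mem_Ioi.mpr one_pos)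
    (Set.mem_Ioi.mpr (by linarith : (0:ℝ) < 1 + x)) hθ0 h1θ hcx
  have hpt : θ • (1:ℝ) + (1 - θ) • (1 + x) = 1 + (k:ℝ) := by
    simp only [smul_eq_mul]
    rw [hθc, hθ]
    field_simp
    ring
  rw [hpt] at hconv
  simp only [Function.comp_apply, Real.Gamma_one, Real.log_one, mul_one, mul_zero] at hconv
  have hg1 : Real.Gamma (1 + (k:ℝ)) = (Nat.factorial k : ℝ) := by
    rw [add_comm]; exact Real.Gamma_nat_eq_factorial k
  rw [hg1] at hconv
  -- hconv : log k! ≤ θ * 0 + (1-θ) * log Γ(1+x)  (roughly)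
  have hfk : (0:ℝ) ≤ Real.log (Nat.factorial k : ℝ) :=
    Real.log_nonneg (by exact_mod_cast Nat.factorial_pos k)
  have hgpos : 0 < Real.Gamma (1 + x) := Real.Gamma_pos_of_pos (by linarith)
  have hkx : (1 - θ) ≤ 1 := by linarith
  have hle : Real.log (Nat.factorial k : ℝ) ≤ Real.log (Real.Gamma (1 + x)) := by
    have h2 : Real.log (Nat.factorial k : ℝ) ≤ (1 - θ) * Real.log (Real.Gamma (1 + x)) := by
      simpa using hconv
    have hglog : 0 ≤ Real.log (Real.Gamma (1 + x)) := by
      set θ' := (x - 1) / x with hθ'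
      have hθ'0 : 0 ≤ θ' := by apply div_nonneg <;> linarith
      have hθ'c : 1 - θ' = 1 / x := by simp only [hθ']; field_simp; ring
      have h1θ' : 0 ≤ 1 - θ' := by rw [hθ'c]; positivity
      have hconv2 := Real.convexOn_log_Gamma.2 (Set.mem_Ioi.mpr one_pos)
        (Set.mem_Ioi.mpr (by linarith : (0:ℝ) < 1 + x)) hθ'0 h1θ' (by ring)
      have hpt2 : θ' • (1:ℝ) + (1 - θ') • (1 + x) = 2 := by
        simp only [smul_eq_mul]
        rw [hθ'c, hθ']
        field_simp
        ring
      rw [hpt2] at hconv2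
      simp only [Function.comp_apply, Real.Gamma_one, Real.Gamma_two, Real.log_one,
        smul_eq_mul, mul_zero, mul_one, zero_add] at hconv2
      have hx1 : (0:ℝ) < 1 / x := by positivity
      rw [hθ'c] at hconv2
      nlinarith
    nlinarith
  exact (Real.log_le_log_iff (by positivity) hgpos).mp hle

lemma holder_mono {Ω : Type*} [MeasurableSpace Ω] (μ : Measure Ω) [IsProbabilityMeasure μ]
    (L : Ω → ℝ) (hLmeas : Measurable L) (hLpos : ∀ ω, 0 ≤ L ω)
    (hintL : ∀ γ : ℝ, 0 < γ → Integrable (fun ω => L ω ^ γ) μ)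
    {p q : ℝ} (hp : 0 < p) (hpq : p ≤ q) :
    ∫ ω, L ω ^ p ∂μ ≤ (∫ ω, L ω ^ q ∂μ) ^ (p / q) := by
  have hq : 0 < q := lt_of_lt_of_le hp hpq
  rcases eq_or_lt_of_le hpq with heq | hlt
  · subst heq
    rw [div_self hp.ne', Real.rpow_one]
  · set r := q / p with hr
    have hr1 : 1 < r := (one_lt_div hp).mpr hlt
    have hr0 : 0 < r := by linarith
    have hrs : r.HolderConjugate (Real.conjExponent r) := Real.HolderConjugate.conjExponent hr1
    set s := Real.conjExponent r with hs
    have hpr : p * r = q := by rw [hr]; field_simp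
    have hcongr : ∀ ω, L ω ^ q = (L ω ^ p) ^ r := by
      intro ω
      rw [← Real.rpow_mul (hLpos ω), hpr]
    have hmf : MemLp (fun ω => L ω ^ p) (ENNReal.ofReal r) μ := by
      have A : ENNReal.ofReal r ≠ 0 := by
        simp only [ne_eq, ENNReal.ofReal_eq_zero, not_le]; linarith
      have B : ENNReal.ofReal r ≠ ⊤ := ENNReal.ofReal_ne_top
      have hmeas : AEStronglyMeasurable (fun ω => L ω ^ p) μ :=
        ((Real.continuous_rpow_const hp.le).measurable.comp hLmeas).aestronglyMeasurable
      rw [← memLp_norm_rpow_iff hmeas A B, ENNReal.toReal_ofReal (by linarith : (0:ℝ) ≤ r),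
        ENNReal.div_self A B, memLp_one_iff_integrable]
      apply (hintL q hq).congr
      apply Eventually.of_forall
      intro ω
      simp only [Real.norm_eq_abs, abs_of_nonneg (Real.rpow_nonneg (hLpos ω) p)]
      exact hcongr ω
    have hmg : MemLp (fun _ : Ω => (1:ℝ)) (ENNReal.ofReal s) μ := memLp_const 1
    have key := integral_mul_le_Lp_mul_Lq_of_nonneg hrs
      (Eventually.of_forall fun ω => Real.rpow_nonneg (hLpos ω) p)
      (Eventually.of_forall fun _ => zero_le_one) hmf hmg
    simp only [mul_one, Real.one_rpow, integral_const, measure_univ, ENNReal.toReal_one, probReal_univ,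
      smul_eq_mul, one_mul] at key
    calc ∫ ω, L ω ^ p ∂μ ≤ (∫ ω, (L ω ^ p) ^ r ∂μ) ^ (1 / r) := key
    _ = (∫ ω, L ω ^ q ∂μ) ^ (p / q) := by
        rw [one_div, hr]
        congr 1
        · exact integral_congr_ae (Eventually.of_forall fun ω => (hcongr ω).symm)
        · rw [inv_div]

lemma E_limit (H β A₁ : ℝ) (hH : 0 < H) (hβ : 0 < β) (hβ1 : β < 1)
    (a b : ℕ → ℕ)
    (ha : ∀ᶠ n in atTop, |(a n : ℝ) - 2*H*n| ≤ 1)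
    (hb : ∀ᶠ n in atTop, |(b n : ℝ) - β * (a n)| ≤ 1) :
    Tendsto (fun n : ℕ =>
      (2*H*n/(a n) * ((a n) * Real.log A₁ + Real.log (Nat.factorial (a n))
          - Real.log (Nat.factorial (b n))) - Real.log (Nat.factorial n)) / n
        + (1 - 2*H*(1-β)) * Real.log n) atTop
      (𝓝 (2*H*Real.log A₁ + (2*H*Real.log (2*H) - 2*H)
          - (2*H*β*Real.log (2*H*β) - 2*H*β) + 1)) := by
  have h2H : 0 < 2*H := by linarith
  have h2Hβ : 0 < 2*H*β := by positivity
  have hA : Tendsto (fun n : ℕ => (a n : ℝ) / n) atTop (𝓝 (2*H)) := by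
    apply ratio_tendsto a (2*H) 1
    filter_upwards [ha] with n hn
    convert hn using 3 <;> ring
  have hb2 : ∀ᶠ n : ℕ in atTop, |(b n : ℝ) - (2*H*β) * n| ≤ 1 + β := by
    filter_upwards [ha, hb] with n hn1 hn2
    have : (b n : ℝ) - (2*H*β)*n = ((b n : ℝ) - β * a n) + β * ((a n : ℝ) - 2*H*n) := by ring
    rw [this]
    calc |((b n : ℝ) - β * a n) + β * ((a n : ℝ) - 2*H*n)|
        ≤ |(b n : ℝ) - β * a n| + |β * ((a n : ℝ) - 2*H*n)| := abs_add_le _ _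
    _ ≤ 1 + β := by
        rw [abs_mul, abs_of_pos hβ]
        have := mul_le_mul_of_nonneg_left hn1 hβ.le
        linarith
  have hB : Tendsto (fun n : ℕ => (b n : ℝ) / n) atTop (𝓝 (2*H*β)) :=
    ratio_tendsto b (2*H*β) (1+β) hb2
  -- eventually a n large
  have hgrow : Tendsto (fun n : ℕ => 2*H*(n:ℝ)) atTop atTop :=
    tendsto_natCast_atTop_atTop.const_mul_atTop h2H
  have hHgrow : Tendsto (fun n : ℕ => H*(n:ℝ)) atTop atTop :=
    tendsto_natCast_atTop_atTop.const_mul_atTop hH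
  have ea1 : ∀ᶠ n : ℕ in atTop, 1 ≤ (a n : ℝ) ∧ H * n ≤ (a n : ℝ) := by
    filter_upwards [ha, hgrow.eventually_ge_atTop 2, hHgrow.eventually_ge_atTop 1] with n hn h2 h1
    have hlb : 2*H*n - 1 ≤ (a n : ℝ) := by
      have := abs_le.mp hn
      linarith [this.1]
    constructor
    · linarith
    · have : H * n ≤ 2*H*n - 1 := by
        have : 2*H*(n:ℝ) = H*n + H*n := by ring
        linarith
      linarith
  -- limits of pieces
  have hP := stirling_log a (2*H) h2H hA
  have hQ := stirling_log b (2*H*β) h2Hβ hB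
  have hR : Tendsto (fun n : ℕ => Real.log (Nat.factorial n) / n - Real.log n + 1)
      atTop (𝓝 0) := by
    have hid : Tendsto (fun n : ℕ => ((n:ℕ) : ℝ) / n) atTop (𝓝 1) := by
      apply ratio_tendsto (fun n => n) 1 0
      filter_upwards with n
      simp
    have hT := (stirling_log (fun n => n) 1 one_pos hid).add_const 1
    have h0 : (1:ℝ) * Real.log 1 - 1 + 1 = 0 := by simp
    rw [h0] at hT
    apply hT.congr'
    filter_upwards [eventually_ge_atTop 1] with n hn
    have hn0 : (n:ℝ) ≠ 0 := by
      have : (0:ℝ) < n := by exact_mod_cast hn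
      exact this.ne'
    field_simp
  have hu : Tendsto (fun n : ℕ => 2*H*(n:ℝ)/(a n)) atTop (𝓝 1) := by
    have hT : Tendsto (fun n : ℕ => 2*H / ((a n : ℝ)/n)) atTop (𝓝 (2*H/(2*H))) :=
      tendsto_const_nhds.div hA h2H.ne'
    rw [div_self h2H.ne'] at hT
    apply hT.congr'
    filter_upwards [ea1, eventually_ge_atTop 1] with n hna hn
    have hn0 : (0:ℝ) < n := by exact_mod_cast hn
    have ha0 : (0:ℝ) < a n := by linarith [hna.1]
    field_simp
  have hD : Tendsto (fun n : ℕ => (2*H*β - (2*H*(n:ℝ)/(a n)) * (b n)/n) * Real.log n)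
      atTop (𝓝 0) := by
    apply squeeze_zero_norm' (a := fun n : ℕ => 2 * (Real.log n / n))
    · filter_upwards [ea1, hb, eventually_ge_atTop 1, hHgrow.eventually_ge_atTop 1]
        with n hna hnb hn hHn
      have hn0 : (0:ℝ) < n := by exact_mod_cast hn
      have ha0 : (0:ℝ) < a n := by linarith [hna.1]
      have hHn0 : (0:ℝ) < H * n := by positivity
      have hlog : 0 ≤ Real.log n := Real.log_nonneg (by exact_mod_cast hn)
      have hXeq : 2*H*β - (2*H*(n:ℝ)/(a n)) * (b n)/n = 2*H*(β * a n - b n)/(a n) := by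
        field_simp
      rw [Real.norm_eq_abs, abs_mul, abs_of_nonneg hlog, hXeq]
      have h1 : |β*(a n:ℝ) - b n| ≤ 1 := by rw [abs_sub_comm]; exact hnb
      have hXle : |2*H*(β * (a n:ℝ) - b n)/(a n)| ≤ 2/(n:ℝ) := by
        rw [abs_div, abs_of_pos ha0, abs_mul, abs_of_pos h2H]
        calc 2*H*|β * (a n:ℝ) - b n|/(a n) ≤ 2*H*1/(a n) := by gcongr
        _ ≤ 2*H*1/(H*n) := by gcongr; exact hna.2
        _ = 2/(n:ℝ) := by field_simp
      calc |2*H*(β * (a n:ℝ) - b n)/(a n)| * Real.log n ≤ 2/(n:ℝ) * Real.log n :=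
            mul_le_mul_of_nonneg_right hXle hlog
      _ = 2 * (Real.log n / n) := by ring
    · simpa using log_div_nat_tendsto.const_mul (2:ℝ)
  -- final assembly
  have hT : Tendsto (fun n : ℕ =>
      2*H*Real.log A₁
      + (2*H*(n:ℝ)/(a n)) * ((Real.log (Nat.factorial (a n)) - (a n : ℝ) * Real.log n) / n)
      - (2*H*(n:ℝ)/(a n)) * ((Real.log (Nat.factorial (b n)) - (b n : ℝ) * Real.log n) / n)
      + (2*H*β - (2*H*(n:ℝ)/(a n)) * (b n)/n) * Real.log n
      + (1 - (Real.log (Nat.factorial n) / n - Real.log n + 1))) atTop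
      (𝓝 (2*H*Real.log A₁ + 1 * (2*H*Real.log (2*H) - 2*H)
          - 1 * (2*H*β*Real.log (2*H*β) - 2*H*β) + 0 + (1 - 0))) := by
    exact (((tendsto_const_nhds.add (hu.mul hP)).sub (hu.mul hQ)).add hD).add
      (tendsto_const_nhds.sub hR)
  have hval : 2*H*Real.log A₁ + 1 * (2*H*Real.log (2*H) - 2*H)
      - 1 * (2*H*β*Real.log (2*H*β) - 2*H*β) + 0 + (1 - 0)
      = 2*H*Real.log A₁ + (2*H*Real.log (2*H) - 2*H)
          - (2*H*β*Real.log (2*H*β) - 2*H*β) + 1 := by ring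
  rw [hval] at hT
  apply hT.congr'
  filter_upwards [ea1, eventually_ge_atTop 1] with n hna hn
  have hn0 : (0:ℝ) < n := by exact_mod_cast hn
  have ha0 : (0:ℝ) < a n := by linarith [hna.1]
  field_simp
  ring

set_option maxHeartbeats 1000000 in
theorem stmt_10 {Ω : Type*} [MeasurableSpace Ω] (μ : Measure Ω) [IsProbabilityMeasure μ]
    (α H A₁ : ℝ) (hα : α ∈ Set.Ioc (1:ℝ) 2) (hH : H ∈ Set.Ioo (0:ℝ) 1)
    (h2H : 2 * H < α) (hA₁ : 0 < A₁)
    (L : Ω → ℝ) (hLmeas : Measurable L) (hLpos : ∀ ω, 0 ≤ L ω)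
    (hmom : ∀ n : ℕ, 1 ≤ n →
      ∫ ω, L ω ^ n ∂μ = A₁ ^ n * (Nat.factorial n : ℝ) / Real.Gamma (1 + n * (1 - 1/α)))
    (hintL : ∀ γ : ℝ, 0 < γ → Integrable (fun ω => L ω ^ γ) μ)
    (c : ℕ → ℝ)
    (hc : ∀ n : ℕ, c n = (∫ ω, L ω ^ (2 * H * n) ∂μ) / (Nat.factorial n : ℝ)) :
    Tendsto
      (fun n : ℕ => (n : ℝ) / ((α / (α - 2 * H)) * Real.exp 1)
          * c n ^ ((α / (α - 2 * H)) / (n : ℝ)))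
      atTop
      (nhds ((α - 2 * H) / α *
        (A₁ * (2 * H) ^ (1/α) / (1 - 1/α) ^ (1 - 1/α)) ^ (2 * H * (α / (α - 2 * H))))) := by
  obtain ⟨hα1, hα2⟩ := hα
  obtain ⟨hH0, hH1⟩ := hH
  have hα0 : (0:ℝ) < α := by linarith
  have h2H0 : (0:ℝ) < 2*H := by linarith
  have hα2H : (0:ℝ) < α - 2*H := by linarith
  set β : ℝ := 1 - 1/α with hβdef
  have hβ0 : 0 < β := by
    have h1a : 1/α < 1 := by rw [div_lt_one hα0]; linarith
    rw [hβdef]; linarith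
  have hβ1 : β < 1 := by
    have h1a : 0 < 1/α := by positivity
    rw [hβdef]; linarith
  set ρ : ℝ := α / (α - 2*H) with hρdef
  have hρ0 : 0 < ρ := by positivity
  have hρ1 : ρ * (1 - 2*H*(1-β)) = 1 := by
    rw [hρdef, hβdef]
    field_simp; ring
  -- sequences
  set m : ℕ → ℕ := fun n => Nat.floor (2*H*(n:ℝ)) with hmdef
  set b1 : ℕ → ℕ := fun n => Nat.floor ((m n : ℝ) * β) + 1 with hb1def
  set b2 : ℕ → ℕ := fun n => Nat.floor ((((m n : ℕ) + 1 : ℕ) : ℝ) * β) with hb2def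
  -- the E_limit instances
  have hma : ∀ᶠ n : ℕ in atTop, |(m n : ℝ) - 2*H*n| ≤ 1 := by
    filter_upwards with n
    have h1 : (m n : ℝ) ≤ 2*H*n := Nat.floor_le (by positivity)
    have h2 : 2*H*(n:ℝ) < m n + 1 := Nat.lt_floor_add_one _
    rw [abs_le]; constructor <;> linarith
  have hma' : ∀ᶠ n : ℕ in atTop, |((fun n => m n + 1) n : ℝ) - 2*H*n| ≤ 1 := by
    filter_upwards with n
    have h1 : (m n : ℝ) ≤ 2*H*n := Nat.floor_le (by positivity)
    have h2 : 2*H*(n:ℝ) < m n + 1 := Nat.lt_floor_add_one _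
    push_cast
    rw [abs_le]; constructor <;> linarith
  have hmb : ∀ᶠ n : ℕ in atTop, |((fun n => b1 n) n : ℝ) - β * ((fun n => m n) n)| ≤ 1 := by
    filter_upwards with n
    have h1 : (Nat.floor ((m n : ℝ) * β) : ℝ) ≤ (m n : ℝ) * β := Nat.floor_le (by positivity)
    have h2 : (m n : ℝ) * β < Nat.floor ((m n : ℝ) * β) + 1 := Nat.lt_floor_add_one _
    simp only [hb1def]
    push_cast
    rw [abs_le, mul_comm β]; constructor <;> linarith
  have hmb' : ∀ᶠ n : ℕ in atTop, |((fun n => b2 n) n : ℝ) - β * ((fun n => m n + 1) n)| ≤ 1 := by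
    filter_upwards with n
    have h1 : (b2 n : ℝ) ≤ (((m n + 1 : ℕ)) : ℝ) * β := Nat.floor_le (by positivity)
    have h2 : (((m n + 1 : ℕ)) : ℝ) * β < b2 n + 1 := Nat.lt_floor_add_one _
    rw [abs_le, mul_comm β]
    constructor
    · linarith
    · linarith
  have Elow := E_limit H β A₁ hH0 hβ0 hβ1 (fun n => m n) (fun n => b1 n) hma hmb
  have Eup := E_limit H β A₁ hH0 hβ0 hβ1 (fun n => m n + 1) (fun n => b2 n) hma' hmb'
  -- eventual sandwich
  have hgrow : Tendsto (fun n : ℕ => 2*H*(n:ℝ)) atTop atTop :=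
    tendsto_natCast_atTop_atTop.const_mul_atTop h2H0
  have hsand : ∀ᶠ n : ℕ in atTop,
      ((2*H*n/((m n : ℝ)) * ((m n : ℝ) * Real.log A₁ + Real.log (Nat.factorial (m n))
          - Real.log (Nat.factorial (b1 n))) - Real.log (Nat.factorial n)) / n
        + (1 - 2*H*(1-β)) * Real.log n
        ≤ Real.log (c n) / n + (1 - 2*H*(1-β)) * Real.log n)
      ∧ (Real.log (c n) / n + (1 - 2*H*(1-β)) * Real.log n
        ≤ (2*H*n/(((m n : ℕ) + 1 : ℕ) : ℝ) * ((((m n : ℕ) + 1 : ℕ) : ℝ) * Real.log A₁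
          + Real.log (Nat.factorial (m n + 1))
          - Real.log (Nat.factorial (b2 n))) - Real.log (Nat.factorial n)) / n
        + (1 - 2*H*(1-β)) * Real.log n)
      ∧ 0 < c n := by
    filter_upwards [eventually_ge_atTop 1, hgrow.eventually_ge_atTop (2/β + 2)] with n hn1 hnγ
    have hn0 : (0:ℝ) < n := by exact_mod_cast hn1
    set γ : ℝ := 2*H*(n:ℝ) with hγdef
    have hγ2 : 2 ≤ γ := by
      have : (0:ℝ) < 2/β := by positivity
      linarith
    have hmle : (m n : ℝ) ≤ γ := Nat.floor_le (by positivity)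
    have hγlt : γ < (m n : ℝ) + 1 := Nat.lt_floor_add_one _
    have hm1 : (1:ℝ) ≤ (m n : ℝ) := by linarith
    have hm1n : 1 ≤ m n := by exact_mod_cast hm1
    have hmβ : 1 ≤ (m n : ℝ) * β := by
      have h2b : 2/β + 1 ≤ (m n : ℝ) := by linarith
      have : (2/β) * β ≤ ((m n : ℝ) - 1) * β := by
        apply mul_le_mul_of_nonneg_right _ hβ0.le
        linarith
      rw [div_mul_cancel₀ _ hβ0.ne'] at this
      nlinarith
    have hmβ' : 1 ≤ ((((m n : ℕ) + 1 : ℕ)) : ℝ) * β := by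
      push_cast
      nlinarith
    -- bridge between npow and rpow integrals
    have hbridge : ∀ k : ℕ, (∫ ω, L ω ^ ((k:ℝ)) ∂μ) = ∫ ω, L ω ^ k ∂μ := by
      intro k
      apply integral_congr_ae
      filter_upwards with ω
      rw [Real.rpow_natCast]
    set Mγ : ℝ := ∫ ω, L ω ^ (2*H*(n:ℝ)) ∂μ with hMγdef
    have hMγnn : 0 ≤ Mγ := integral_nonneg fun ω => Real.rpow_nonneg (hLpos ω) _
    -- lower bound via Hölder
    have hold1 : (∫ ω, L ω ^ ((m n : ℝ)) ∂μ) ≤ Mγ ^ ((m n : ℝ)/γ) :=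
      holder_mono μ L hLmeas hLpos hintL (by linarith : (0:ℝ) < (m n : ℝ)) hmle
    have hMm : (∫ ω, L ω ^ ((m n : ℝ)) ∂μ)
        = A₁ ^ (m n) * (Nat.factorial (m n) : ℝ) / Real.Gamma (1 + (m n : ℝ) * β) := by
      rw [hbridge (m n), hmom (m n) hm1n]
    have hΓm : 0 < Real.Gamma (1 + (m n : ℝ) * β) := Real.Gamma_pos_of_pos (by nlinarith)
    have hMmpos : 0 < ∫ ω, L ω ^ ((m n : ℝ)) ∂μ := by
      rw [hMm]; positivity
    have hγpos : (0:ℝ) < γ := by linarith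
    have hMγpos : 0 < Mγ := by
      rcases hMγnn.eq_or_lt' with h0 | h
      · exfalso
        rw [h0, Real.zero_rpow (ne_of_gt (div_pos (by linarith) hγpos))] at hold1
        linarith
      · exact h
    -- lower bound on log c n
    have hlogMm : Real.log (∫ ω, L ω ^ ((m n : ℝ)) ∂μ)
        = (m n : ℝ) * Real.log A₁ + Real.log (Nat.factorial (m n) : ℝ)
          - Real.log (Real.Gamma (1 + (m n : ℝ) * β)) := by
      rw [hMm, Real.log_div (by positivity) hΓm.ne', Real.log_mul (by positivity)
        (by positivity), Real.log_pow]
    have hΓub : Real.Gamma (1 + (m n : ℝ) * β) ≤ (Nat.factorial (b1 n) : ℝ) := by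
      have := gamma_upper hmβ
      simpa [hb1def] using this
    have hlow1 : (m n : ℝ) * Real.log A₁ + Real.log (Nat.factorial (m n) : ℝ)
        - Real.log (Nat.factorial (b1 n) : ℝ) ≤ Real.log (∫ ω, L ω ^ ((m n : ℝ)) ∂μ) := by
      rw [hlogMm]
      have := Real.log_le_log hΓm hΓub
      linarith
    have hlow2 : Real.log (∫ ω, L ω ^ ((m n : ℝ)) ∂μ) ≤ ((m n : ℝ)/γ) * Real.log Mγ := by
      rw [← Real.log_rpow hMγpos]
      exact Real.log_le_log hMmpos hold1
    have hlow3 : (γ/(m n : ℝ)) * ((m n : ℝ) * Real.log A₁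
        + Real.log (Nat.factorial (m n) : ℝ) - Real.log (Nat.factorial (b1 n) : ℝ))
        ≤ Real.log Mγ := by
      have hfrac : 0 ≤ γ/(m n : ℝ) := le_of_lt (div_pos hγpos (by linarith))
      have h := mul_le_mul_of_nonneg_left (hlow1.trans hlow2) hfrac
      rwa [show (γ/(m n : ℝ))*(((m n : ℝ)/γ)*Real.log Mγ) = Real.log Mγ from by
        field_simp] at h
    have hfacn : (0:ℝ) < (Nat.factorial n : ℝ) := by exact_mod_cast Nat.factorial_pos n
    have hcpos : 0 < c n := by
      rw [hc n, ← hMγdef]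
      exact div_pos hMγpos hfacn
    have hclog : Real.log (c n) = Real.log Mγ - Real.log (Nat.factorial n : ℝ) := by
      rw [hc n, ← hMγdef, Real.log_div hMγpos.ne' hfacn.ne']
    -- upper bound on log c n
    have hm1c : γ ≤ (((m n + 1 : ℕ)) : ℝ) := by push_cast; linarith
    have hold2 : Mγ ≤ (∫ ω, L ω ^ ((((m n + 1 : ℕ)) : ℝ)) ∂μ) ^ (γ/(((m n + 1 : ℕ)) : ℝ)) :=
      holder_mono μ L hLmeas hLpos hintL hγpos hm1c
    have hMm1 : (∫ ω, L ω ^ ((((m n + 1 : ℕ)) : ℝ)) ∂μ)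
        = A₁ ^ (m n + 1) * (Nat.factorial (m n + 1) : ℝ)
          / Real.Gamma (1 + (((m n + 1 : ℕ)) : ℝ) * β) := by
      rw [hbridge (m n + 1), hmom (m n + 1) (Nat.le_add_left 1 (m n))]
    have hΓm1 : 0 < Real.Gamma (1 + (((m n + 1 : ℕ)) : ℝ) * β) :=
      Real.Gamma_pos_of_pos (by nlinarith)
    have hM1pos : 0 < ∫ ω, L ω ^ ((((m n + 1 : ℕ)) : ℝ)) ∂μ := by
      rw [hMm1]; positivity
    have hΓlb : (Nat.factorial (b2 n) : ℝ) ≤ Real.Gamma (1 + (((m n + 1 : ℕ)) : ℝ) * β) := by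
      have := gamma_lower hmβ'
      simpa [hb2def] using this
    have hup1 : Real.log (∫ ω, L ω ^ ((((m n + 1 : ℕ)) : ℝ)) ∂μ)
        ≤ (((m n + 1 : ℕ)) : ℝ) * Real.log A₁ + Real.log (Nat.factorial (m n + 1) : ℝ)
          - Real.log (Nat.factorial (b2 n) : ℝ) := by
      rw [hMm1, Real.log_div (by positivity) hΓm1.ne', Real.log_mul (by positivity)
        (by positivity), Real.log_pow]
      have := Real.log_le_log (by positivity : (0:ℝ) < (Nat.factorial (b2 n) : ℝ)) hΓlb
      push_cast
      push_cast at this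
      linarith
    have hup2 : Real.log Mγ ≤ (γ/(((m n + 1 : ℕ)) : ℝ)) * Real.log
        (∫ ω, L ω ^ ((((m n + 1 : ℕ)) : ℝ)) ∂μ) := by
      rw [← Real.log_rpow hM1pos]
      exact Real.log_le_log hMγpos hold2
    have hup3 : Real.log Mγ ≤ (γ/(((m n + 1 : ℕ)) : ℝ)) * ((((m n + 1 : ℕ)) : ℝ) * Real.log A₁
        + Real.log (Nat.factorial (m n + 1) : ℝ) - Real.log (Nat.factorial (b2 n) : ℝ)) := by
      have hfrac : 0 ≤ γ/(((m n + 1 : ℕ)) : ℝ) :=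
        le_of_lt (div_pos hγpos (by positivity))
      exact hup2.trans (mul_le_mul_of_nonneg_left hup1 hfrac)
    refine ⟨?_, ?_, hcpos⟩
    · apply add_le_add_left
      apply (div_le_div_iff_of_pos_right hn0).2
      rw [hclog]
      exact sub_le_sub_right hlow3 _
    · apply add_le_add_left
      apply (div_le_div_iff_of_pos_right hn0).2
      rw [hclog]
      exact sub_le_sub_right hup3 _
  -- squeeze
  set K : ℝ := 2*H*Real.log A₁ + (2*H*Real.log (2*H) - 2*H)
      - (2*H*β*Real.log (2*H*β) - 2*H*β) + 1 with hKdef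
  have Th : Tendsto (fun n : ℕ => Real.log (c n) / n + (1 - 2*H*(1-β)) * Real.log n)
      atTop (𝓝 K) := by
    apply tendsto_of_tendsto_of_tendsto_of_le_of_le' Elow Eup
    · filter_upwards [hsand] with n h
      exact h.1
    · filter_upwards [hsand] with n h
      exact h.2.1
  -- final transformation
  have hexp : Tendsto (fun n : ℕ => Real.exp (ρ * (Real.log (c n) / n
      + (1 - 2*H*(1-β)) * Real.log n) - Real.log ρ - 1)) atTop
      (𝓝 (Real.exp (ρ * K - Real.log ρ - 1))) :=
    (Real.continuous_exp.tendsto _).comp (((Th.const_mul ρ).sub_const (Real.log ρ)).sub_const 1)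
  have htarget : (α - 2 * H) / α *
      (A₁ * (2 * H) ^ (1/α) / β ^ β) ^ (2 * H * ρ) = Real.exp (ρ * K - Real.log ρ - 1) := by
    have hX : (0:ℝ) < A₁ * (2 * H) ^ (1/α) / β ^ β := by positivity
    have hlogX : Real.log (A₁ * (2 * H) ^ (1/α) / β ^ β)
        = Real.log A₁ + (1/α) * Real.log (2*H) - β * Real.log β := by
      rw [Real.log_div (by positivity) (by positivity), Real.log_mul hA₁.ne' (by positivity),
        Real.log_rpow h2H0, Real.log_rpow hβ0]
    rw [Real.rpow_def_of_pos hX, hlogX]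
    have hfrac : (α - 2*H)/α = ρ⁻¹ := by rw [hρdef, inv_div]
    rw [hfrac, ← Real.exp_log hρ0, ← Real.exp_neg, ← Real.exp_add]
    congr 1
    rw [Real.exp_log hρ0]
    rw [hKdef, Real.log_mul h2H0.ne' hβ0.ne', hρdef, hβdef]
    field_simp
    ring
  rw [htarget]
  apply hexp.congr'
  filter_upwards [hsand, eventually_ge_atTop 1] with n h hn1
  have hn0 : (0:ℝ) < n := by exact_mod_cast hn1
  have hcpos := h.2.2
  rw [Real.rpow_def_of_pos hcpos]
  rw [show ρ * (Real.log (c n) / n + (1 - 2*H*(1-β)) * Real.log n) - Real.log ρ - 1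
      = Real.log (c n) * (ρ/n) + Real.log n - (Real.log ρ + 1) from by
    linear_combination Real.log (n:ℝ) * hρ1]
  rw [Real.exp_sub, Real.exp_add, Real.exp_add, Real.exp_log hn0, Real.exp_log hρ0]
  ring
end

section
/- Let (Xₜ)_{t≥0} be a stochastic process with continuous paths, σ(h) = h^{H(α−1)/α} and suppose there exist constants A₇, A₈ > 0 such that for all 0 ≤ a < b and x > 0, P(max_{a≤t≤b}|X(t) − X(a)| > x) ≤ A₇ exp(−A₈ x^{2α/(α+2H)}/(b−a)^{2H(α−1)/(α+2H)}). Then almost surely limsup_{t→∞} max_{0≤s≤t}|X(s)| / (t^{H(α−1)/α}(log log t)^{(α+2H)/(2α)}) ≤ A₈^{−(α+2H)/(2α)}. -/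
open MeasureTheory Real Filter

-- boundedness of the restricted sup
lemma aux_bdd {Ω : Type*} (X : ℝ → Ω → ℝ) (hcont : ∀ ω, ContinuousOn (fun t => X t ω) (Set.Ici 0))
    (ω : Ω) (T : ℝ) : BddAbove (Set.range fun s : Set.Icc (0:ℝ) T => |X s ω|) := by
  have h : BddAbove ((fun s => |X s ω|) '' Set.Icc (0:ℝ) T) :=
    IsCompact.bddAbove_image isCompact_Icc (((hcont ω).mono Set.Icc_subset_Ici_self).abs)
  rwa [Set.image_eq_range] at h

lemma aux_sup_nonneg {Ω : Type*} (X : ℝ → Ω → ℝ)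
    (hcont : ∀ ω, ContinuousOn (fun t => X t ω) (Set.Ici 0))
    (hzero : ∀ ω, X 0 ω = 0) (ω : Ω) (t : ℝ) (ht : 0 ≤ t) :
    0 ≤ ⨆ s : Set.Icc (0:ℝ) t, |X s ω| := by
  have h0 : (0:ℝ) ∈ Set.Icc (0:ℝ) t := Set.left_mem_Icc.2 ht
  have := le_ciSup (aux_bdd X hcont ω t) (⟨0, h0⟩ : Set.Icc (0:ℝ) t)
  simpa [hzero ω] using this

lemma aux_sup_mono {Ω : Type*} (X : ℝ → Ω → ℝ)
    (hcont : ∀ ω, ContinuousOn (fun t => X t ω) (Set.Ici 0))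
    (ω : Ω) (a b : ℝ) (ha : 0 ≤ a) (hab : a ≤ b) :
    (⨆ s : Set.Icc (0:ℝ) a, |X s ω|) ≤ ⨆ s : Set.Icc (0:ℝ) b, |X s ω| := by
  haveI : Nonempty (Set.Icc (0:ℝ) a) := ⟨⟨0, Set.left_mem_Icc.2 ha⟩⟩
  refine ciSup_le fun s => ?_
  exact le_ciSup (aux_bdd X hcont ω b) ⟨s.1, Set.Icc_subset_Icc_right hab s.2⟩

theorem stmt13_key {Ω : Type*} [MeasurableSpace Ω] (μ : Measure Ω) [IsProbabilityMeasure μ]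
    (α H A₇ A₈ : ℝ) (hα : α ∈ Set.Ioc (1:ℝ) 2) (hH : H ∈ Set.Ioo (0:ℝ) 1)
    (hA₇ : 0 < A₇) (hA₈ : 0 < A₈)
    (X : ℝ → Ω → ℝ)
    (hcont : ∀ ω, ContinuousOn (fun t => X t ω) (Set.Ici 0))
    (hzero : ∀ ω, X 0 ω = 0)
    (htail : ∀ a b x : ℝ, 0 ≤ a → a < b → 0 < x →
      μ {ω | x < ⨆ t : Set.Icc a b, |X t ω - X a ω|}
        ≤ ENNReal.ofReal (A₇ * Real.exp (-(A₈ * x ^ (2 * α / (α + 2 * H))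
            / (b - a) ^ (2 * H * (α - 1) / (α + 2 * H))))))
    (L : ℝ) (hL : A₈ ^ (-((α + 2 * H) / (2 * α))) < L) :
    ∀ᵐ ω ∂μ,
      Filter.limsup
        (fun t : ℝ => (⨆ s : Set.Icc 0 t, |X s ω|)
          / (t ^ (H * (α - 1) / α) * (Real.log (Real.log t)) ^ ((α + 2 * H) / (2 * α))))
        atTop
      ≤ L := by
  obtain ⟨hα1, hα2⟩ := hα
  obtain ⟨hH0, hH1⟩ := hH
  have hα0 : (0:ℝ) < α := by linarith
  have hαH : (0:ℝ) < α + 2 * H := by linarith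
  set θ : ℝ := (α + 2 * H) / (2 * α) with hθdef
  set β : ℝ := H * (α - 1) / α with hβdef
  set q : ℝ := 2 * α / (α + 2 * H) with hqdef
  set p : ℝ := 2 * H * (α - 1) / (α + 2 * H) with hpdef
  have hθ0 : 0 < θ := by rw [hθdef]; positivity
  have hβ0 : 0 < β := by
    have h1 : 0 < α - 1 := by linarith
    rw [hβdef]; positivity
  have hq0 : 0 < q := by rw [hqdef]; positivity
  have hθq : θ * q = 1 := by rw [hθdef, hqdef]; field_simp
  have hβq : β * q = p := by rw [hβdef, hqdef, hpdef]; field_simp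
  have hA8θ : (0:ℝ) < A₈ ^ (-θ) := Real.rpow_pos_of_pos hA₈ _
  set c : ℝ := (A₈ ^ (-θ) + L) / 2 with hcdef
  have hc0 : 0 < c := by rw [hcdef]; linarith
  have hcl : A₈ ^ (-θ) < c := by rw [hcdef]; linarith
  have hcL : c < L := by rw [hcdef]; linarith
  have hLc1 : 1 < L / c := (one_lt_div hc0).2 hcL
  set ρ : ℝ := (L / c) ^ (β⁻¹) with hρdef
  have hρ1 : 1 < ρ := Real.one_lt_rpow_iff_of_pos (by linarith) |>.2 (Or.inl ⟨hLc1, by positivity⟩)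
  have hρ0 : 0 < ρ := by linarith
  have hρβ : c * ρ ^ β = L := by
    rw [hρdef, ← Real.rpow_mul (by positivity : (0:ℝ) ≤ L / c),
      inv_mul_cancel₀ (ne_of_gt hβ0), Real.rpow_one, mul_div_cancel₀ _ (ne_of_gt hc0)]
  have hlogρ : 0 < Real.log ρ := Real.log_pos hρ1
  set s : ℝ := A₈ * c ^ q with hsdef
  have hs1 : 1 < s := by
    have h1 : (A₈ ^ (-θ)) ^ q < c ^ q := Real.rpow_lt_rpow (le_of_lt hA8θ) hcl hq0
    have h2 : (A₈ ^ (-θ)) ^ q = A₈⁻¹ := by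
      rw [← Real.rpow_mul hA₈.le, neg_mul, hθq, Real.rpow_neg_one]
    have := mul_lt_mul_of_pos_left h1 hA₈
    rw [h2, mul_inv_cancel₀ (ne_of_gt hA₈)] at this
    exact this
  obtain ⟨N₀, hN₀⟩ := exists_nat_ge (2 / Real.log ρ + 2)
  have hN₀2 : (2:ℝ) ≤ (N₀:ℝ) := by
    have : 0 < 2 / Real.log ρ := by positivity
    linarith
  set T : ℕ → ℝ := fun m => ρ ^ m with hTdef
  have hT0 : ∀ m, 0 < T m := fun m => pow_pos hρ0 m
  set l : ℕ → ℝ := fun n => Real.log ((((n + N₀ : ℕ):ℝ) - 1) * Real.log ρ) with hldef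
  have hbig : ∀ n : ℕ, 1 < (((n + N₀ : ℕ):ℝ) - 1) * Real.log ρ := by
    intro n
    have hn0 : (0:ℝ) ≤ (n:ℝ) := Nat.cast_nonneg n
    have h1 : 2 / Real.log ρ + 1 ≤ (((n + N₀ : ℕ):ℝ) - 1) := by push_cast; linarith
    have h2 : (2 / Real.log ρ + 1) * Real.log ρ ≤ (((n + N₀ : ℕ):ℝ) - 1) * Real.log ρ :=
      mul_le_mul_of_nonneg_right h1 hlogρ.le
    have h3 : (2 / Real.log ρ + 1) * Real.log ρ = 2 + Real.log ρ := by field_simp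
    rw [h3] at h2; linarith
  have hl0 : ∀ n, 0 < l n := fun n => Real.log_pos (hbig n)
  set x : ℕ → ℝ := fun n => c * (T (n + N₀)) ^ β * (l n) ^ θ with hxdef
  have hx0 : ∀ n, 0 < x n :=
    fun n => mul_pos (mul_pos hc0 (Real.rpow_pos_of_pos (hT0 _) _))
      (Real.rpow_pos_of_pos (hl0 n) _)
  set E : ℕ → Set Ω := fun n => {ω | x n < ⨆ t : Set.Icc (0:ℝ) (T (n + N₀)), |X t ω|} with hEdef
  have hE : ∀ n, μ (E n) ≤ ENNReal.ofReal (A₇ * ((((n:ℝ) + 1) * Real.log ρ) ^ (-s))) := by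
    intro n
    have h1 := htail 0 (T (n + N₀)) (x n) le_rfl (hT0 _) (hx0 n)
    have hset : {ω | x n < ⨆ t : Set.Icc (0:ℝ) (T (n + N₀)), |X t ω - X 0 ω|} = E n := by
      ext ω; simp [hzero ω, hEdef]
    rw [hset, sub_zero] at h1
    refine le_trans h1 (ENNReal.ofReal_le_ofReal ?_)
    have hxq : (x n) ^ q = c ^ q * ((T (n + N₀)) ^ p * l n) := by
      rw [hxdef]
      rw [Real.mul_rpow (mul_nonneg hc0.le (Real.rpow_pos_of_pos (hT0 _) _).le)
          (Real.rpow_pos_of_pos (hl0 n) _).le,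
        Real.mul_rpow hc0.le (Real.rpow_pos_of_pos (hT0 _) _).le,
        ← Real.rpow_mul (hT0 _).le, hβq, ← Real.rpow_mul (hl0 n).le, hθq, Real.rpow_one]
      ring
    have hTp0 : (0:ℝ) < (T (n + N₀)) ^ p := Real.rpow_pos_of_pos (hT0 _) _
    have hexp : A₈ * (x n) ^ q / (T (n + N₀)) ^ p = s * l n := by
      rw [hxq, hsdef]; field_simp
    rw [hexp]
    have hy0 : 0 < (((n + N₀ : ℕ):ℝ) - 1) * Real.log ρ := lt_trans one_pos (hbig n)
    have hyeq : Real.exp (-(s * l n)) = ((((n + N₀ : ℕ):ℝ) - 1) * Real.log ρ) ^ (-s) := by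
      rw [Real.rpow_def_of_pos hy0, hldef]; ring_nf
    rw [hyeq]
    refine mul_le_mul_of_nonneg_left ?_ hA₇.le
    refine Real.rpow_le_rpow_of_nonpos (by positivity) ?_ (by linarith)
    refine mul_le_mul_of_nonneg_right ?_ hlogρ.le
    push_cast; linarith
  have hsum : Summable (fun n : ℕ => A₇ * ((((n:ℝ) + 1) * Real.log ρ) ^ (-s))) := by
    have h1 : Summable (fun n : ℕ => ((n:ℝ)) ^ (-s)) := Real.summable_nat_rpow.2 (by linarith)
    have h2 : Summable (fun n : ℕ => ((n:ℝ) + 1) ^ (-s)) := by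
      have h := (summable_nat_add_iff 1).2 h1
      refine h.congr fun n => ?_
      push_cast; ring_nf
    have h3 : Summable (fun n : ℕ => (((n:ℝ) + 1) * Real.log ρ) ^ (-s)) := by
      refine (h2.mul_right ((Real.log ρ) ^ (-s))).congr fun n => ?_
      rw [Real.mul_rpow (by positivity) hlogρ.le]
    exact h3.mul_left A₇
  have htop : (∑' n, μ (E n)) ≠ ⊤ := by
    have h1 : (∑' n, μ (E n)) ≤ ∑' (n : ℕ), ENNReal.ofReal (A₇ * ((((n:ℝ) + 1) * Real.log ρ) ^ (-s))) :=
      ENNReal.tsum_le_tsum hE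
    rw [← ENNReal.ofReal_tsum_of_nonneg (fun n => by positivity) hsum] at h1
    exact ne_top_of_le_ne_top ENNReal.ofReal_ne_top h1
  have hBC := ae_eventually_notMem (μ := μ) htop
  filter_upwards [hBC] with ω hω
  obtain ⟨N₁, hN₁⟩ := eventually_atTop.1 hω
  have hev : ∀ᶠ t : ℝ in atTop,
      (⨆ s' : Set.Icc (0:ℝ) t, |X s' ω|) / (t ^ β * (Real.log (Real.log t)) ^ θ) ≤ L := by
    filter_upwards [eventually_ge_atTop (ρ ^ (N₁ + N₀ + 1)),
      eventually_ge_atTop (Real.exp (Real.exp 1))] with t ht1 ht2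
    have ht_pos : 0 < t := lt_of_lt_of_le (Real.exp_pos _) ht2
    have hlogt : Real.exp 1 ≤ Real.log t := by
      rw [← Real.log_exp (Real.exp 1)]
      exact Real.log_le_log (Real.exp_pos _) ht2
    have hlogt0 : 0 < Real.log t := lt_of_lt_of_le (Real.exp_pos 1) hlogt
    have hllogt : 1 ≤ Real.log (Real.log t) := by
      rw [← Real.log_exp 1]
      exact Real.log_le_log (Real.exp_pos 1) hlogt
    set m : ℕ := Nat.floor (Real.log t / Real.log ρ) with hmdef
    have hm_le : (m:ℝ) * Real.log ρ ≤ Real.log t := by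
      have := Nat.floor_le (a := Real.log t / Real.log ρ) (by positivity)
      rw [← hmdef] at this
      exact (le_div_iff₀ hlogρ).1 this
    have hm_lt : Real.log t < ((m:ℝ) + 1) * Real.log ρ := by
      have := Nat.lt_floor_add_one (Real.log t / Real.log ρ)
      rw [← hmdef] at this
      exact (div_lt_iff₀ hlogρ).1 (by exact_mod_cast this)
    have hρm_le_t : ρ ^ m ≤ t := by
      calc ρ ^ m = Real.exp ((m:ℝ) * Real.log ρ) := by
            rw [← Real.log_pow, Real.exp_log (pow_pos hρ0 m)]
        _ ≤ Real.exp (Real.log t) := Real.exp_le_exp.2 hm_le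
        _ = t := Real.exp_log ht_pos
    have ht_le : t ≤ ρ ^ (m + 1) := by
      calc t = Real.exp (Real.log t) := (Real.exp_log ht_pos).symm
        _ ≤ Real.exp (((m:ℝ) + 1) * Real.log ρ) := Real.exp_le_exp.2 hm_lt.le
        _ = ρ ^ (m + 1) := by
            rw [show ((m:ℝ) + 1) = ((m + 1 : ℕ):ℝ) by push_cast; ring,
              ← Real.log_pow, Real.exp_log (pow_pos hρ0 _)]
    have hm_ge : N₁ + N₀ + 1 ≤ m := by
      apply Nat.le_floor
      rw [le_div_iff₀ hlogρ]
      calc ((N₁ + N₀ + 1 : ℕ):ℝ) * Real.log ρ = Real.log (ρ ^ (N₁ + N₀ + 1)) := by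
            rw [Real.log_pow]
        _ ≤ Real.log t := Real.log_le_log (pow_pos hρ0 _) ht1
    set n : ℕ := m + 1 - N₀ with hndef
    have hnN : n + N₀ = m + 1 := by
      have : N₀ ≤ m := by omega
      omega
    have hb : (⨆ t' : Set.Icc (0:ℝ) (T (n + N₀)), |X t' ω|) ≤ x n := by
      have := hN₁ n (by omega)
      rw [hEdef] at this
      exact not_lt.1 this
    have hcast : ((n + N₀ : ℕ):ℝ) - 1 = (m:ℝ) := by rw [hnN]; push_cast; ring
    have hTval : T (n + N₀) = ρ ^ (m + 1) := by rw [hTdef, hnN]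
    -- numerator bound
    have hnum : (⨆ s' : Set.Icc (0:ℝ) t, |X s' ω|) ≤ x n := by
      refine le_trans ?_ hb
      rw [hTval]
      exact aux_sup_mono X hcont ω t (ρ ^ (m + 1)) ht_pos.le ht_le
    -- x n ≤ L * (t^β * (log log t)^θ)
    have hlm : l n ≤ Real.log (Real.log t) := by
      rw [hldef]
      simp only [hcast]
      have hy0 : 0 < (m:ℝ) * Real.log ρ := by
        have := hbig n; rw [hcast] at this; linarith
      exact Real.log_le_log hy0 hm_le
    have hl_nonneg : 0 ≤ l n := (hl0 n).le
    have hrpow1 : (ρ ^ (m + 1) : ℝ) ^ β ≤ t ^ β * ρ ^ β := by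
      have h1 : (ρ ^ (m + 1) : ℝ) = ρ ^ m * ρ := by rw [pow_succ]
      rw [h1, Real.mul_rpow (pow_pos hρ0 m).le hρ0.le]
      exact mul_le_mul_of_nonneg_right
        (Real.rpow_le_rpow (pow_pos hρ0 m).le hρm_le_t hβ0.le)
        (Real.rpow_nonneg hρ0.le β)
    have hrpow2 : (l n) ^ θ ≤ (Real.log (Real.log t)) ^ θ :=
      Real.rpow_le_rpow hl_nonneg hlm hθ0.le
    have hden_pos : 0 < t ^ β * (Real.log (Real.log t)) ^ θ :=
      mul_pos (Real.rpow_pos_of_pos ht_pos β) (Real.rpow_pos_of_pos (by linarith) θ)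
    have hxL : x n ≤ L * (t ^ β * (Real.log (Real.log t)) ^ θ) := by
      simp only [hxdef]
      rw [hTval]
      calc c * (ρ ^ (m + 1) : ℝ) ^ β * (l n) ^ θ
          ≤ c * (t ^ β * ρ ^ β) * (Real.log (Real.log t)) ^ θ := by
            apply mul_le_mul
            · exact mul_le_mul_of_nonneg_left hrpow1 hc0.le
            · exact hrpow2
            · positivity
            · positivity
        _ = (c * ρ ^ β) * (t ^ β * (Real.log (Real.log t)) ^ θ) := by ring
        _ = L * (t ^ β * (Real.log (Real.log t)) ^ θ) := by rw [hρβ]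
    rw [div_le_iff₀ hden_pos]
    exact le_trans hnum hxL
  have hfreq : ∃ᶠ t : ℝ in atTop, (0:ℝ) ≤
      (⨆ s' : Set.Icc (0:ℝ) t, |X s' ω|) / (t ^ β * (Real.log (Real.log t)) ^ θ) := by
    apply Filter.Eventually.frequently
    filter_upwards [eventually_ge_atTop (Real.exp (Real.exp 1))] with t ht2
    have ht_pos : 0 < t := lt_of_lt_of_le (Real.exp_pos _) ht2
    apply div_nonneg (aux_sup_nonneg X hcont hzero ω t ht_pos.le)
    have hlogt : Real.exp 1 ≤ Real.log t := by
      rw [← Real.log_exp (Real.exp 1)]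
      exact Real.log_le_log (Real.exp_pos _) ht2
    have hllogt : 0 < Real.log (Real.log t) :=
      Real.log_pos (lt_of_lt_of_le (Real.one_lt_exp_iff.2 one_pos) hlogt)
    positivity
  exact Filter.limsup_le_of_le (Filter.IsCoboundedUnder.of_frequently_ge hfreq) hev

theorem stmt_13 {Ω : Type*} [MeasurableSpace Ω] (μ : Measure Ω) [IsProbabilityMeasure μ]
    (α H A₇ A₈ : ℝ) (hα : α ∈ Set.Ioc (1:ℝ) 2) (hH : H ∈ Set.Ioo (0:ℝ) 1)
    (hA₇ : 0 < A₇) (hA₈ : 0 < A₈)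
    (X : ℝ → Ω → ℝ)
    (hcont : ∀ ω, ContinuousOn (fun t => X t ω) (Set.Ici 0))
    (hzero : ∀ ω, X 0 ω = 0)
    (htail : ∀ a b x : ℝ, 0 ≤ a → a < b → 0 < x →
      μ {ω | x < ⨆ t : Set.Icc a b, |X t ω - X a ω|}
        ≤ ENNReal.ofReal (A₇ * Real.exp (-(A₈ * x ^ (2 * α / (α + 2 * H))
            / (b - a) ^ (2 * H * (α - 1) / (α + 2 * H)))))) :
    ∀ᵐ ω ∂μ,
      Filter.limsup
        (fun t : ℝ => (⨆ s : Set.Icc 0 t, |X s ω|)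
          / (t ^ (H * (α - 1) / α) * (Real.log (Real.log t)) ^ ((α + 2 * H) / (2 * α))))
        atTop
      ≤ A₈ ^ (-((α + 2 * H) / (2 * α))) := by
  have main : ∀ᵐ ω ∂μ, ∀ k : ℕ,
      Filter.limsup
        (fun t : ℝ => (⨆ s : Set.Icc 0 t, |X s ω|)
          / (t ^ (H * (α - 1) / α) * (Real.log (Real.log t)) ^ ((α + 2 * H) / (2 * α))))
        atTop
      ≤ A₈ ^ (-((α + 2 * H) / (2 * α))) + 1 / ((k:ℝ) + 1) := by
    rw [ae_all_iff]
    intro k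
    exact stmt13_key μ α H A₇ A₈ hα hH hA₇ hA₈ X hcont hzero htail _
      (lt_add_of_pos_right _ (by positivity))
  filter_upwards [main] with ω h
  have htend : Filter.Tendsto
      (fun k : ℕ => A₈ ^ (-((α + 2 * H) / (2 * α))) + 1 / ((k:ℝ) + 1)) atTop
      (nhds (A₈ ^ (-((α + 2 * H) / (2 * α))))) := by
    have h0 := tendsto_one_div_add_atTop_nhds_zero_nat (𝕜 := ℝ)
    simpa using tendsto_const_nhds.add h0
  exact ge_of_tendsto htend (Filter.Eventually.of_forall h)
end
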